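/- arXiv:2511.14785 — 2 statements merged into one kernel-verified Lean document; each statement's English description precedes it below -/
import Mathlib

section
/- The pseudo-rhombicuboctahedron is not vertex-transitive under its full symmetry group: it is not the case that for all u, v ∈ V' there exists A ∈ O(3) with A(V') = V' and A·u = v. (In particular, unlike the 13 Archimedean solids, it is not vertex-transitive, which is why it is excluded from Kepler's list.) -/
noncomputable def base : Fin 3 → ℝ := ![1, 1, 1 + Real.sqrt 2]

/-- The vertex set of the rhombicuboctahedron with edge length 2 centered at the origin:
all points whose coordinates are, in some order, `±1, ±1, ±(1 + √2)`
(all coordinate permutations combined with all choices of signs). -/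
def V : Set (EuclideanSpace ℝ (Fin 3)) :=
  {v | ∃ σ : Equiv.Perm (Fin 3), ∃ ε : Fin 3 → ℝ,
    (∀ i, ε i = 1 ∨ ε i = -1) ∧ ∀ i, v i = ε i * base (σ i)}

noncomputable def pt (a b c : ℝ) : EuclideanSpace ℝ (Fin 3) := WithLp.toLp 2 ![a, b, c]

/-- The four top-cupola vertices `(±1, ±1, 1 + √2)` of the rhombicuboctahedron
that get replaced. -/
noncomputable def Vtop : Set (EuclideanSpace ℝ (Fin 3)) :=
  {pt 1 1 (1 + Real.sqrt 2), pt 1 (-1) (1 + Real.sqrt 2),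
   pt (-1) 1 (1 + Real.sqrt 2), pt (-1) (-1) (1 + Real.sqrt 2)}

/-- The four new top vertices `(±√2, 0, 1 + √2)` and `(0, ±√2, 1 + √2)`
(the top square cupola rotated by 45° about the z-axis). -/
noncomputable def Vnew : Set (EuclideanSpace ℝ (Fin 3)) :=
  {pt (Real.sqrt 2) 0 (1 + Real.sqrt 2), pt (-Real.sqrt 2) 0 (1 + Real.sqrt 2),
   pt 0 (Real.sqrt 2) (1 + Real.sqrt 2), pt 0 (-Real.sqrt 2) (1 + Real.sqrt 2)}

/-- The vertex set of the pseudo-rhombicuboctahedron (elongated square gyrobicupola)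
with edge length 2. -/
noncomputable def V' : Set (EuclideanSpace ℝ (Fin 3)) := (V \ Vtop) ∪ Vnew

/-- The action of a 3×3 real matrix on ℝ³ (as `EuclideanSpace ℝ (Fin 3)`). -/
def act (A : Matrix (Fin 3) (Fin 3) ℝ) (v : EuclideanSpace ℝ (Fin 3)) :
    EuclideanSpace ℝ (Fin 3) := WithLp.toLp 2 (A.mulVec v)

/-- A permutation of `Fin 3` sending `0 ↦ 2, 1 ↦ 0, 2 ↦ 1`. -/
def sig : Equiv.Perm (Fin 3) :=
  ⟨![2, 0, 1], ![1, 2, 0], by decide, by decide⟩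

lemma sqrt2_sq : Real.sqrt 2 * Real.sqrt 2 = 2 :=
  Real.mul_self_sqrt (by norm_num)

lemma sqrt2_nonneg : 0 ≤ Real.sqrt 2 := Real.sqrt_nonneg 2

/-- `u₀ = (1+√2, 1, 1)` is in `V`. -/
lemma u0_mem_V : pt (1 + Real.sqrt 2) 1 1 ∈ V := by
  refine ⟨sig, fun _ => 1, fun i => Or.inl rfl, fun i => ?_⟩
  fin_cases i <;> simp [pt, base, sig]

/-- `-u₀ = (-(1+√2), -1, -1)` is in `V`. -/
lemma neg_u0_mem_V : -pt (1 + Real.sqrt 2) 1 1 ∈ V := by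
  refine ⟨sig, fun _ => -1, fun i => Or.inr rfl, fun i => ?_⟩
  fin_cases i <;> simp [pt, base, sig]

lemma u0_not_mem_Vtop : pt (1 + Real.sqrt 2) 1 1 ∉ Vtop := by
  have hs := sqrt2_sq
  have hs0 := sqrt2_nonneg
  intro hmem
  simp only [Vtop, Set.mem_insert_iff, Set.mem_singleton_iff] at hmem
  rcases hmem with h | h | h | h <;>
    (have h0 := congrFun (congrArg WithLp.ofLp h) 0; simp [pt] at h0; try nlinarith)

lemma neg_u0_not_mem_Vtop : -pt (1 + Real.sqrt 2) 1 1 ∉ Vtop := by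
  have hs := sqrt2_sq
  have hs0 := sqrt2_nonneg
  intro hmem
  simp only [Vtop, Set.mem_insert_iff, Set.mem_singleton_iff] at hmem
  rcases hmem with h | h | h | h <;>
    (have h2 := congrFun (congrArg WithLp.ofLp h) 2; simp [pt] at h2; try nlinarith)

/-- `-v₀ = (-√2, 0, -(1+√2))` is not in `V'`. -/
lemma neg_v0_not_mem : -pt (Real.sqrt 2) 0 (1 + Real.sqrt 2) ∉ V' := by
  have hs := sqrt2_sq
  have hs0 := sqrt2_nonneg
  rintro (⟨⟨σ, ε, hε, h⟩, -⟩ | hnew)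
  · have h0 := h 0
    have hval : (-pt (Real.sqrt 2) 0 (1 + Real.sqrt 2)) 0 = -Real.sqrt 2 := by
      simp [pt]
    rw [hval] at h0
    have h3 : σ 0 = 0 ∨ σ 0 = 1 ∨ σ 0 = 2 := by omega
    rcases h3 with h' | h' | h' <;> rw [h'] at h0 <;>
      simp only [base, Matrix.cons_val_zero, Matrix.cons_val_one, Matrix.head_cons,
        Matrix.cons_val_two, Matrix.tail_cons] at h0 <;>
      rcases hε 0 with he | he <;> rw [he] at h0 <;> nlinarith
  · simp only [Vnew, Set.mem_insert_iff, Set.mem_singleton_iff] at hnew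
    rcases hnew with h | h | h | h <;>
      (have h2 := congrFun (congrArg WithLp.ofLp h) 2; simp [pt] at h2; try nlinarith)

/-- The pseudo-rhombicuboctahedron is not vertex-transitive under its full symmetry
group: it is not the case that for all `u, v ∈ V'` some `A ∈ O(3)` with `A(V') = V'`
satisfies `A·u = v`. -/
theorem pseudoRhombicuboctahedron_not_vertex_transitive :
    ¬ (∀ u ∈ V', ∀ v ∈ V', ∃ A : Matrix (Fin 3) (Fin 3) ℝ,
      A ∈ Matrix.orthogonalGroup (Fin 3) ℝ ∧ act A '' V' = V' ∧ act A u = v) := by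
  intro h
  set u0 : EuclideanSpace ℝ (Fin 3) := pt (1 + Real.sqrt 2) 1 1 with hu0
  set v0 : EuclideanSpace ℝ (Fin 3) := pt (Real.sqrt 2) 0 (1 + Real.sqrt 2) with hv0
  have hu : u0 ∈ V' := Or.inl ⟨u0_mem_V, u0_not_mem_Vtop⟩
  have hv : v0 ∈ V' := Or.inr (by left; rfl)
  obtain ⟨A, -, hIm, hA⟩ := h u0 hu v0 hv
  have hnu : -u0 ∈ V' := Or.inl ⟨neg_u0_mem_V, neg_u0_not_mem_Vtop⟩
  have himg : act A (-u0) ∈ V' := by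
    rw [← hIm]; exact Set.mem_image_of_mem _ hnu
  have hlin : act A (-u0) = -v0 := by
    rw [← hA]
    simp [act, Matrix.mulVec_neg]
  rw [hlin] at himg
  exact neg_v0_not_mem himg
end

section
/- In the pseudo-rhombicuboctahedron every vertex has exactly 4 neighbors: the minimum Euclidean distance between distinct points of V' is 2, and for every v ∈ V' the set of points u ∈ V' with dist(u, v) = 2 has exactly 4 elements. -/
noncomputable def emb (q : ℤ × ℤ) : ℝ := q.1 + q.2 * Real.sqrt 2
abbrev T := (ℤ × ℤ) × (ℤ × ℤ) × (ℤ × ℤ)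
noncomputable def toE (p : T) : EuclideanSpace ℝ (Fin 3) := pt (emb p.1) (emb p.2.1) (emb p.2.2)
def zmul (p q : ℤ × ℤ) : ℤ × ℤ := (p.1*q.1 + 2*p.2*q.2, p.1*q.2 + p.2*q.1)
def zsub (p q : ℤ × ℤ) : ℤ × ℤ := (p.1 - q.1, p.2 - q.2)
def zadd (p q : ℤ × ℤ) : ℤ × ℤ := (p.1 + q.1, p.2 + q.2)
def zsq (p : ℤ × ℤ) : ℤ × ℤ := zmul p p
def d2 (p q : T) : ℤ × ℤ :=
  zadd (zsq (zsub p.1 q.1)) (zadd (zsq (zsub p.2.1 q.2.1)) (zsq (zsub p.2.2 q.2.2)))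

def nonnegE (q : ℤ × ℤ) : Prop :=
  (0 ≤ q.1 ∧ 0 ≤ q.2) ∨ (0 ≤ q.1 ∧ 2*q.2^2 ≤ q.1^2) ∨ (0 ≤ q.2 ∧ q.1^2 ≤ 2*q.2^2)
instance (q : ℤ × ℤ) : Decidable (nonnegE q) := by unfold nonnegE; infer_instance
def ge4 (q : ℤ × ℤ) : Prop := nonnegE (q.1 - 4, q.2)
instance (q : ℤ × ℤ) : Decidable (ge4 q) := by unfold ge4; infer_instance

lemma emb_inj : Function.Injective emb := by
  rintro ⟨a,b⟩ ⟨c,d⟩ h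
  simp only [emb] at h
  by_cases hbd : b = d
  · subst hbd
    have : (a:ℝ) = c := by linarith
    have : a = c := by exact_mod_cast this
    simp [this]
  · exfalso
    apply irrational_sqrt_two
    refine ⟨(a - c) / (d - b), ?_⟩
    have hbd' : ((d:ℝ) - (b:ℝ)) ≠ 0 := by
      intro hh
      exact hbd (by exact_mod_cast (by linarith : (b:ℝ) = d))
    push_cast
    field_simp
    linarith

lemma toE_inj : Function.Injective toE := by
  intro p q h
  have h0 : toE p 0 = toE q 0 := by rw [h]
  have h1 : toE p 1 = toE q 1 := by rw [h]
  have h2 : toE p 2 = toE q 2 := by rw [h]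
  have e0 := emb_inj (show emb p.1 = emb q.1 from h0)
  have e1 := emb_inj (show emb p.2.1 = emb q.2.1 from h1)
  have e2 := emb_inj (show emb p.2.2 = emb q.2.2 from h2)
  exact Prod.ext e0 (Prod.ext e1 e2)

lemma nonnegE_emb {q : ℤ × ℤ} (h : nonnegE q) : 0 ≤ emb q := by
  obtain ⟨a, b⟩ := q
  have hs0 : (0:ℝ) ≤ Real.sqrt 2 := Real.sqrt_nonneg 2
  have hs2 : Real.sqrt 2 ^ 2 = 2 := Real.sq_sqrt (by norm_num)
  simp only [emb]
  rcases h with ⟨h1, h2⟩ | ⟨h1, h2⟩ | ⟨h1, h2⟩ <;>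
    [skip; skip; skip]
  · have h1' : (0:ℝ) ≤ a := by exact_mod_cast h1
    have h2' : (0:ℝ) ≤ b := by exact_mod_cast h2
    positivity
  · have h1' : (0:ℝ) ≤ a := by exact_mod_cast h1
    have h2' : 2*(b:ℝ)^2 ≤ (a:ℝ)^2 := by exact_mod_cast h2
    rcases le_or_gt 0 (b:ℝ) with hb | hb
    · positivity
    · nlinarith [hs2, hs0, mul_nonneg h1' hs0]
  · have h1' : (0:ℝ) ≤ b := by exact_mod_cast h1
    have h2' : (a:ℝ)^2 ≤ 2*(b:ℝ)^2 := by exact_mod_cast h2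
    rcases le_or_gt 0 (a:ℝ) with ha | ha
    · positivity
    · nlinarith [hs2, hs0, mul_nonneg h1' hs0]

lemma dist_sq (p q : T) : dist (toE p) (toE q) ^ 2 = emb (d2 p q) := by
  rw [EuclideanSpace.dist_eq, Real.sq_sqrt (by positivity)]
  obtain ⟨⟨a1,b1⟩,⟨a2,b2⟩,⟨a3,b3⟩⟩ := p
  obtain ⟨⟨c1,d1⟩,⟨c2,d2'⟩,⟨c3,d3⟩⟩ := q
  have hs2 : Real.sqrt 2 ^ 2 = 2 := Real.sq_sqrt (by norm_num)
  simp only [Fin.sum_univ_three, toE, pt, emb, d2, zadd, zsub, zmul, zsq, Real.dist_eq, sq_abs,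
    Matrix.cons_val_zero, Matrix.cons_val_one, Matrix.head_cons, Matrix.cons_val_two, Matrix.tail_cons]
  push_cast
  linear_combination (((b1:ℝ)-d1)^2 + ((b2:ℝ)-d2')^2 + ((b3:ℝ)-d3)^2) * hs2

lemma ge4_le_dist {p q : T} (h : ge4 (d2 p q)) : 2 ≤ dist (toE p) (toE q) := by
  have h4 : (4:ℝ) ≤ emb (d2 p q) := by
    have := nonnegE_emb h
    simp only [emb] at this ⊢
    push_cast at this ⊢
    linarith
  have hd := dist_sq p q
  have hnn : (0:ℝ) ≤ dist (toE p) (toE q) := dist_nonneg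
  nlinarith

lemma dist_eq_two_iff {p q : T} : dist (toE p) (toE q) = 2 ↔ d2 p q = (4, 0) := by
  constructor
  · intro h
    have hd := dist_sq p q
    rw [h] at hd
    have h4 : emb (d2 p q) = 4 := by rw [← hd]; norm_num
    have : emb (d2 p q) = emb (4, 0) := by rw [h4]; simp [emb]
    exact emb_inj this
  · intro h
    have hd := dist_sq p q
    rw [h] at hd
    have h4 : dist (toE p) (toE q) ^ 2 = 4 := by
      rw [hd]; simp [emb]
    have hnn : (0:ℝ) ≤ dist (toE p) (toE q) := dist_nonneg
    nlinarith

lemma eq_pt {v : EuclideanSpace ℝ (Fin 3)} {a b c : ℝ}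
    (h0 : v 0 = a) (h1 : v 1 = b) (h2 : v 2 = c) : v = pt a b c := by
  ext i
  fin_cases i
  · exact h0
  · exact h1
  · exact h2

lemma pt_mem_V_0 {a b c : ℝ} (ha : a = 1 + Real.sqrt 2 ∨ a = -(1 + Real.sqrt 2))
    (hb : b = 1 ∨ b = -1) (hc : c = 1 ∨ c = -1) : pt a b c ∈ V := by
  have hsw0 : (Equiv.swap (0:Fin 3) 2) 0 = 2 := Equiv.swap_apply_left 0 2
  have hsw1 : (Equiv.swap (0:Fin 3) 2) 1 = 1 := Equiv.swap_apply_of_ne_of_ne (by decide) (by decide)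
  have hsw2 : (Equiv.swap (0:Fin 3) 2) 2 = 0 := Equiv.swap_apply_right 0 2
  rcases ha with rfl | rfl
  · refine ⟨Equiv.swap 0 2, ![1, b, c], ?_, ?_⟩
    · intro i; fin_cases i
      · exact Or.inl rfl
      · exact hb
      · exact hc
    · intro i; fin_cases i
      · show (1 + Real.sqrt 2) = (1:ℝ) * base ((Equiv.swap (0:Fin 3) 2) 0)
        rw [hsw0]; show (1 + Real.sqrt 2) = 1 * (1 + Real.sqrt 2); ring
      · show b = b * base ((Equiv.swap (0:Fin 3) 2) 1)
        rw [hsw1]; show b = b * 1; ring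
      · show c = c * base ((Equiv.swap (0:Fin 3) 2) 2)
        rw [hsw2]; show c = c * 1; ring
  · refine ⟨Equiv.swap 0 2, ![-1, b, c], ?_, ?_⟩
    · intro i; fin_cases i
      · exact Or.inr rfl
      · exact hb
      · exact hc
    · intro i; fin_cases i
      · show -(1 + Real.sqrt 2) = (-1:ℝ) * base ((Equiv.swap (0:Fin 3) 2) 0)
        rw [hsw0]; show -(1 + Real.sqrt 2) = -1 * (1 + Real.sqrt 2); ring
      · show b = b * base ((Equiv.swap (0:Fin 3) 2) 1)
        rw [hsw1]; show b = b * 1; ring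
      · show c = c * base ((Equiv.swap (0:Fin 3) 2) 2)
        rw [hsw2]; show c = c * 1; ring

lemma pt_mem_V_1 {a b c : ℝ} (hb : b = 1 + Real.sqrt 2 ∨ b = -(1 + Real.sqrt 2))
    (ha : a = 1 ∨ a = -1) (hc : c = 1 ∨ c = -1) : pt a b c ∈ V := by
  have hsw0 : (Equiv.swap (1:Fin 3) 2) 0 = 0 := Equiv.swap_apply_of_ne_of_ne (by decide) (by decide)
  have hsw1 : (Equiv.swap (1:Fin 3) 2) 1 = 2 := Equiv.swap_apply_left 1 2
  have hsw2 : (Equiv.swap (1:Fin 3) 2) 2 = 1 := Equiv.swap_apply_right 1 2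
  rcases hb with rfl | rfl
  · refine ⟨Equiv.swap 1 2, ![a, 1, c], ?_, ?_⟩
    · intro i; fin_cases i
      · exact ha
      · exact Or.inl rfl
      · exact hc
    · intro i; fin_cases i
      · show a = a * base ((Equiv.swap (1:Fin 3) 2) 0)
        rw [hsw0]; show a = a * 1; ring
      · show (1 + Real.sqrt 2) = (1:ℝ) * base ((Equiv.swap (1:Fin 3) 2) 1)
        rw [hsw1]; show (1 + Real.sqrt 2) = 1 * (1 + Real.sqrt 2); ring
      · show c = c * base ((Equiv.swap (1:Fin 3) 2) 2)
        rw [hsw2]; show c = c * 1; ring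
  · refine ⟨Equiv.swap 1 2, ![a, -1, c], ?_, ?_⟩
    · intro i; fin_cases i
      · exact ha
      · exact Or.inr rfl
      · exact hc
    · intro i; fin_cases i
      · show a = a * base ((Equiv.swap (1:Fin 3) 2) 0)
        rw [hsw0]; show a = a * 1; ring
      · show -(1 + Real.sqrt 2) = (-1:ℝ) * base ((Equiv.swap (1:Fin 3) 2) 1)
        rw [hsw1]; show -(1 + Real.sqrt 2) = -1 * (1 + Real.sqrt 2); ring
      · show c = c * base ((Equiv.swap (1:Fin 3) 2) 2)
        rw [hsw2]; show c = c * 1; ring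

lemma pt_mem_V_2 {a b c : ℝ} (hc : c = 1 + Real.sqrt 2 ∨ c = -(1 + Real.sqrt 2))
    (ha : a = 1 ∨ a = -1) (hb : b = 1 ∨ b = -1) : pt a b c ∈ V := by
  rcases hc with rfl | rfl
  · refine ⟨Equiv.refl _, ![a, b, 1], ?_, ?_⟩
    · intro i; fin_cases i
      · exact ha
      · exact hb
      · exact Or.inl rfl
    · intro i; fin_cases i
      · show a = a * base 0; show a = a * 1; ring
      · show b = b * base 1; show b = b * 1; ring
      · show (1 + Real.sqrt 2) = (1:ℝ) * base 2
        show (1 + Real.sqrt 2) = 1 * (1 + Real.sqrt 2); ring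
  · refine ⟨Equiv.refl _, ![a, b, -1], ?_, ?_⟩
    · intro i; fin_cases i
      · exact ha
      · exact hb
      · exact Or.inr rfl
    · intro i; fin_cases i
      · show a = a * base 0; show a = a * 1; ring
      · show b = b * base 1; show b = b * 1; ring
      · show -(1 + Real.sqrt 2) = (-1:ℝ) * base 2
        show -(1 + Real.sqrt 2) = -1 * (1 + Real.sqrt 2); ring

lemma sqrt2_pos : (0:ℝ) < Real.sqrt 2 := Real.sqrt_pos.2 (by norm_num)

lemma not_mem_Vtop {v : EuclideanSpace ℝ (Fin 3)} (h : v 2 ≠ 1 + Real.sqrt 2) : v ∉ Vtop := by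
  intro hm
  apply h
  rcases hm with rfl | rfl | rfl | rfl <;> rfl

lemma toE_eq {p : T} {v : EuclideanSpace ℝ (Fin 3)}
    (h0 : v 0 = emb p.1) (h1 : v 1 = emb p.2.1) (h2 : v 2 = emb p.2.2) : v = toE p :=
  eq_pt h0 h1 h2

def Lpts : List T :=
  [(((1:ℤ),(1:ℤ)), ((1:ℤ),(0:ℤ)), ((1:ℤ),(0:ℤ))),
   (((1:ℤ),(1:ℤ)), ((1:ℤ),(0:ℤ)), ((-1:ℤ),(0:ℤ))),
   (((1:ℤ),(1:ℤ)), ((-1:ℤ),(0:ℤ)), ((1:ℤ),(0:ℤ))),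
   (((1:ℤ),(1:ℤ)), ((-1:ℤ),(0:ℤ)), ((-1:ℤ),(0:ℤ))),
   (((-1:ℤ),(-1:ℤ)), ((1:ℤ),(0:ℤ)), ((1:ℤ),(0:ℤ))),
   (((-1:ℤ),(-1:ℤ)), ((1:ℤ),(0:ℤ)), ((-1:ℤ),(0:ℤ))),
   (((-1:ℤ),(-1:ℤ)), ((-1:ℤ),(0:ℤ)), ((1:ℤ),(0:ℤ))),
   (((-1:ℤ),(-1:ℤ)), ((-1:ℤ),(0:ℤ)), ((-1:ℤ),(0:ℤ))),
   (((1:ℤ),(0:ℤ)), ((1:ℤ),(1:ℤ)), ((1:ℤ),(0:ℤ))),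
   (((1:ℤ),(0:ℤ)), ((1:ℤ),(1:ℤ)), ((-1:ℤ),(0:ℤ))),
   (((1:ℤ),(0:ℤ)), ((-1:ℤ),(-1:ℤ)), ((1:ℤ),(0:ℤ))),
   (((1:ℤ),(0:ℤ)), ((-1:ℤ),(-1:ℤ)), ((-1:ℤ),(0:ℤ))),
   (((-1:ℤ),(0:ℤ)), ((1:ℤ),(1:ℤ)), ((1:ℤ),(0:ℤ))),
   (((-1:ℤ),(0:ℤ)), ((1:ℤ),(1:ℤ)), ((-1:ℤ),(0:ℤ))),
   (((-1:ℤ),(0:ℤ)), ((-1:ℤ),(-1:ℤ)), ((1:ℤ),(0:ℤ))),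
   (((-1:ℤ),(0:ℤ)), ((-1:ℤ),(-1:ℤ)), ((-1:ℤ),(0:ℤ))),
   (((1:ℤ),(0:ℤ)), ((1:ℤ),(0:ℤ)), ((-1:ℤ),(-1:ℤ))),
   (((1:ℤ),(0:ℤ)), ((-1:ℤ),(0:ℤ)), ((-1:ℤ),(-1:ℤ))),
   (((-1:ℤ),(0:ℤ)), ((1:ℤ),(0:ℤ)), ((-1:ℤ),(-1:ℤ))),
   (((-1:ℤ),(0:ℤ)), ((-1:ℤ),(0:ℤ)), ((-1:ℤ),(-1:ℤ))),
   (((0:ℤ),(1:ℤ)), ((0:ℤ),(0:ℤ)), ((1:ℤ),(1:ℤ))),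
   (((0:ℤ),(-1:ℤ)), ((0:ℤ),(0:ℤ)), ((1:ℤ),(1:ℤ))),
   (((0:ℤ),(0:ℤ)), ((0:ℤ),(1:ℤ)), ((1:ℤ),(1:ℤ))),
   (((0:ℤ),(0:ℤ)), ((0:ℤ),(-1:ℤ)), ((1:ℤ),(1:ℤ)))]

lemma sub2 : toE '' {p | p ∈ Lpts} ⊆ V' := by
  rintro x ⟨p, hp, rfl⟩
  simp only [Set.mem_setOf_eq, Lpts, List.mem_cons, List.not_mem_nil, or_false] at hp
  rcases hp with rfl|rfl|rfl|rfl|rfl|rfl|rfl|rfl|rfl|rfl|rfl|rfl|rfl|rfl|rfl|rfl|rfl|rfl|rfl|rfl|rfl|rfl|rfl|rfl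
  · exact Or.inl ⟨pt_mem_V_0 (Or.inl (by push_cast [emb]; ring)) (Or.inl (by push_cast [emb]; ring)) (Or.inl (by push_cast [emb]; ring)), not_mem_Vtop (by show emb ((1:ℤ),(0:ℤ)) ≠ 1 + Real.sqrt 2; intro h; push_cast [emb] at h; linarith [sqrt2_pos])⟩
  · exact Or.inl ⟨pt_mem_V_0 (Or.inl (by push_cast [emb]; ring)) (Or.inl (by push_cast [emb]; ring)) (Or.inr (by push_cast [emb]; ring)), not_mem_Vtop (by show emb ((-1:ℤ),(0:ℤ)) ≠ 1 + Real.sqrt 2; intro h; push_cast [emb] at h; linarith [sqrt2_pos])⟩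
  · exact Or.inl ⟨pt_mem_V_0 (Or.inl (by push_cast [emb]; ring)) (Or.inr (by push_cast [emb]; ring)) (Or.inl (by push_cast [emb]; ring)), not_mem_Vtop (by show emb ((1:ℤ),(0:ℤ)) ≠ 1 + Real.sqrt 2; intro h; push_cast [emb] at h; linarith [sqrt2_pos])⟩
  · exact Or.inl ⟨pt_mem_V_0 (Or.inl (by push_cast [emb]; ring)) (Or.inr (by push_cast [emb]; ring)) (Or.inr (by push_cast [emb]; ring)), not_mem_Vtop (by show emb ((-1:ℤ),(0:ℤ)) ≠ 1 + Real.sqrt 2; intro h; push_cast [emb] at h; linarith [sqrt2_pos])⟩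
  · exact Or.inl ⟨pt_mem_V_0 (Or.inr (by push_cast [emb]; ring)) (Or.inl (by push_cast [emb]; ring)) (Or.inl (by push_cast [emb]; ring)), not_mem_Vtop (by show emb ((1:ℤ),(0:ℤ)) ≠ 1 + Real.sqrt 2; intro h; push_cast [emb] at h; linarith [sqrt2_pos])⟩
  · exact Or.inl ⟨pt_mem_V_0 (Or.inr (by push_cast [emb]; ring)) (Or.inl (by push_cast [emb]; ring)) (Or.inr (by push_cast [emb]; ring)), not_mem_Vtop (by show emb ((-1:ℤ),(0:ℤ)) ≠ 1 + Real.sqrt 2; intro h; push_cast [emb] at h; linarith [sqrt2_pos])⟩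
  · exact Or.inl ⟨pt_mem_V_0 (Or.inr (by push_cast [emb]; ring)) (Or.inr (by push_cast [emb]; ring)) (Or.inl (by push_cast [emb]; ring)), not_mem_Vtop (by show emb ((1:ℤ),(0:ℤ)) ≠ 1 + Real.sqrt 2; intro h; push_cast [emb] at h; linarith [sqrt2_pos])⟩
  · exact Or.inl ⟨pt_mem_V_0 (Or.inr (by push_cast [emb]; ring)) (Or.inr (by push_cast [emb]; ring)) (Or.inr (by push_cast [emb]; ring)), not_mem_Vtop (by show emb ((-1:ℤ),(0:ℤ)) ≠ 1 + Real.sqrt 2; intro h; push_cast [emb] at h; linarith [sqrt2_pos])⟩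
  · exact Or.inl ⟨pt_mem_V_1 (Or.inl (by push_cast [emb]; ring)) (Or.inl (by push_cast [emb]; ring)) (Or.inl (by push_cast [emb]; ring)), not_mem_Vtop (by show emb ((1:ℤ),(0:ℤ)) ≠ 1 + Real.sqrt 2; intro h; push_cast [emb] at h; linarith [sqrt2_pos])⟩
  · exact Or.inl ⟨pt_mem_V_1 (Or.inl (by push_cast [emb]; ring)) (Or.inl (by push_cast [emb]; ring)) (Or.inr (by push_cast [emb]; ring)), not_mem_Vtop (by show emb ((-1:ℤ),(0:ℤ)) ≠ 1 + Real.sqrt 2; intro h; push_cast [emb] at h; linarith [sqrt2_pos])⟩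
  · exact Or.inl ⟨pt_mem_V_1 (Or.inr (by push_cast [emb]; ring)) (Or.inl (by push_cast [emb]; ring)) (Or.inl (by push_cast [emb]; ring)), not_mem_Vtop (by show emb ((1:ℤ),(0:ℤ)) ≠ 1 + Real.sqrt 2; intro h; push_cast [emb] at h; linarith [sqrt2_pos])⟩
  · exact Or.inl ⟨pt_mem_V_1 (Or.inr (by push_cast [emb]; ring)) (Or.inl (by push_cast [emb]; ring)) (Or.inr (by push_cast [emb]; ring)), not_mem_Vtop (by show emb ((-1:ℤ),(0:ℤ)) ≠ 1 + Real.sqrt 2; intro h; push_cast [emb] at h; linarith [sqrt2_pos])⟩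
  · exact Or.inl ⟨pt_mem_V_1 (Or.inl (by push_cast [emb]; ring)) (Or.inr (by push_cast [emb]; ring)) (Or.inl (by push_cast [emb]; ring)), not_mem_Vtop (by show emb ((1:ℤ),(0:ℤ)) ≠ 1 + Real.sqrt 2; intro h; push_cast [emb] at h; linarith [sqrt2_pos])⟩
  · exact Or.inl ⟨pt_mem_V_1 (Or.inl (by push_cast [emb]; ring)) (Or.inr (by push_cast [emb]; ring)) (Or.inr (by push_cast [emb]; ring)), not_mem_Vtop (by show emb ((-1:ℤ),(0:ℤ)) ≠ 1 + Real.sqrt 2; intro h; push_cast [emb] at h; linarith [sqrt2_pos])⟩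
  · exact Or.inl ⟨pt_mem_V_1 (Or.inr (by push_cast [emb]; ring)) (Or.inr (by push_cast [emb]; ring)) (Or.inl (by push_cast [emb]; ring)), not_mem_Vtop (by show emb ((1:ℤ),(0:ℤ)) ≠ 1 + Real.sqrt 2; intro h; push_cast [emb] at h; linarith [sqrt2_pos])⟩
  · exact Or.inl ⟨pt_mem_V_1 (Or.inr (by push_cast [emb]; ring)) (Or.inr (by push_cast [emb]; ring)) (Or.inr (by push_cast [emb]; ring)), not_mem_Vtop (by show emb ((-1:ℤ),(0:ℤ)) ≠ 1 + Real.sqrt 2; intro h; push_cast [emb] at h; linarith [sqrt2_pos])⟩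
  · exact Or.inl ⟨pt_mem_V_2 (Or.inr (by push_cast [emb]; ring)) (Or.inl (by push_cast [emb]; ring)) (Or.inl (by push_cast [emb]; ring)), not_mem_Vtop (by show emb ((-1:ℤ),(-1:ℤ)) ≠ 1 + Real.sqrt 2; intro h; push_cast [emb] at h; linarith [sqrt2_pos])⟩
  · exact Or.inl ⟨pt_mem_V_2 (Or.inr (by push_cast [emb]; ring)) (Or.inl (by push_cast [emb]; ring)) (Or.inr (by push_cast [emb]; ring)), not_mem_Vtop (by show emb ((-1:ℤ),(-1:ℤ)) ≠ 1 + Real.sqrt 2; intro h; push_cast [emb] at h; linarith [sqrt2_pos])⟩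
  · exact Or.inl ⟨pt_mem_V_2 (Or.inr (by push_cast [emb]; ring)) (Or.inr (by push_cast [emb]; ring)) (Or.inl (by push_cast [emb]; ring)), not_mem_Vtop (by show emb ((-1:ℤ),(-1:ℤ)) ≠ 1 + Real.sqrt 2; intro h; push_cast [emb] at h; linarith [sqrt2_pos])⟩
  · exact Or.inl ⟨pt_mem_V_2 (Or.inr (by push_cast [emb]; ring)) (Or.inr (by push_cast [emb]; ring)) (Or.inr (by push_cast [emb]; ring)), not_mem_Vtop (by show emb ((-1:ℤ),(-1:ℤ)) ≠ 1 + Real.sqrt 2; intro h; push_cast [emb] at h; linarith [sqrt2_pos])⟩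
  · refine Or.inr ?_
    simp only [Vnew, Set.mem_insert_iff, Set.mem_singleton_iff]
    exact Or.inl (eq_pt (by show emb ((0:ℤ),(1:ℤ)) = _; push_cast [emb]; ring) (by show emb ((0:ℤ),(0:ℤ)) = _; push_cast [emb]; ring) (by show emb ((1:ℤ),(1:ℤ)) = _; push_cast [emb]; ring))
  · refine Or.inr ?_
    simp only [Vnew, Set.mem_insert_iff, Set.mem_singleton_iff]
    exact Or.inr (Or.inl (eq_pt (by show emb ((0:ℤ),(-1:ℤ)) = _; push_cast [emb]; ring) (by show emb ((0:ℤ),(0:ℤ)) = _; push_cast [emb]; ring) (by show emb ((1:ℤ),(1:ℤ)) = _; push_cast [emb]; ring)))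
  · refine Or.inr ?_
    simp only [Vnew, Set.mem_insert_iff, Set.mem_singleton_iff]
    exact Or.inr (Or.inr (Or.inl (eq_pt (by show emb ((0:ℤ),(0:ℤ)) = _; push_cast [emb]; ring) (by show emb ((0:ℤ),(1:ℤ)) = _; push_cast [emb]; ring) (by show emb ((1:ℤ),(1:ℤ)) = _; push_cast [emb]; ring))))
  · refine Or.inr ?_
    simp only [Vnew, Set.mem_insert_iff, Set.mem_singleton_iff]
    exact Or.inr (Or.inr (Or.inr (eq_pt (by show emb ((0:ℤ),(0:ℤ)) = _; push_cast [emb]; ring) (by show emb ((0:ℤ),(-1:ℤ)) = _; push_cast [emb]; ring) (by show emb ((1:ℤ),(1:ℤ)) = _; push_cast [emb]; ring))))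

lemma sub1 : V' ⊆ toE '' {p | p ∈ Lpts} := by
  rintro v hv
  rcases hv with ⟨⟨σ, ε, hε, hv⟩, hvt⟩ | hnew
  · have hbase : ∀ j : Fin 3, base j = if j = (2:Fin 3) then 1 + Real.sqrt 2 else 1 := by
      intro j; fin_cases j <;> simp [base]
    have key : ∀ i, v i = ε i * (if i = σ.symm 2 then 1 + Real.sqrt 2 else 1) := by
      intro i
      rw [hv i, hbase (σ i)]
      congr 1
      by_cases h : i = σ.symm 2
      · rw [if_pos h, if_pos (by rw [h]; exact σ.apply_symm_apply 2)]
      · rw [if_neg h, if_neg (fun hc => h (by rw [← hc, σ.symm_apply_apply]))]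
    have h3 : σ.symm 2 = 0 ∨ σ.symm 2 = 1 ∨ σ.symm 2 = 2 := by
      rcases (σ.symm 2) with ⟨_|_|_|_, hlt⟩
      · exact Or.inl rfl
      · exact Or.inr (Or.inl rfl)
      · exact Or.inr (Or.inr rfl)
      · omega
    rcases h3 with hk | hk | hk
    · have h0 : v 0 = ε 0 * (1 + Real.sqrt 2) := by rw [key 0, if_pos hk.symm]
      have h1 : v 1 = ε 1 := by rw [key 1, if_neg (by rw [hk]; decide), mul_one]
      have h2 : v 2 = ε 2 := by rw [key 2, if_neg (by rw [hk]; decide), mul_one]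
      rcases hε 0 with e0 | e0 <;> rcases hε 1 with e1 | e1 <;> rcases hε 2 with e2 | e2 <;>
        rw [e0] at h0 <;> rw [e1] at h1 <;> rw [e2] at h2
      · exact ⟨(((1:ℤ),(1:ℤ)), ((1:ℤ),(0:ℤ)), ((1:ℤ),(0:ℤ))), (by decide : (((1:ℤ),(1:ℤ)), ((1:ℤ),(0:ℤ)), ((1:ℤ),(0:ℤ))) ∈ Lpts), (toE_eq (by rw [h0]; push_cast [emb]; ring) (by rw [h1]; push_cast [emb]; ring) (by rw [h2]; push_cast [emb]; ring)).symm⟩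
      · exact ⟨(((1:ℤ),(1:ℤ)), ((1:ℤ),(0:ℤ)), ((-1:ℤ),(0:ℤ))), (by decide : (((1:ℤ),(1:ℤ)), ((1:ℤ),(0:ℤ)), ((-1:ℤ),(0:ℤ))) ∈ Lpts), (toE_eq (by rw [h0]; push_cast [emb]; ring) (by rw [h1]; push_cast [emb]; ring) (by rw [h2]; push_cast [emb]; ring)).symm⟩
      · exact ⟨(((1:ℤ),(1:ℤ)), ((-1:ℤ),(0:ℤ)), ((1:ℤ),(0:ℤ))), (by decide : (((1:ℤ),(1:ℤ)), ((-1:ℤ),(0:ℤ)), ((1:ℤ),(0:ℤ))) ∈ Lpts), (toE_eq (by rw [h0]; push_cast [emb]; ring) (by rw [h1]; push_cast [emb]; ring) (by rw [h2]; push_cast [emb]; ring)).symm⟩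
      · exact ⟨(((1:ℤ),(1:ℤ)), ((-1:ℤ),(0:ℤ)), ((-1:ℤ),(0:ℤ))), (by decide : (((1:ℤ),(1:ℤ)), ((-1:ℤ),(0:ℤ)), ((-1:ℤ),(0:ℤ))) ∈ Lpts), (toE_eq (by rw [h0]; push_cast [emb]; ring) (by rw [h1]; push_cast [emb]; ring) (by rw [h2]; push_cast [emb]; ring)).symm⟩
      · exact ⟨(((-1:ℤ),(-1:ℤ)), ((1:ℤ),(0:ℤ)), ((1:ℤ),(0:ℤ))), (by decide : (((-1:ℤ),(-1:ℤ)), ((1:ℤ),(0:ℤ)), ((1:ℤ),(0:ℤ))) ∈ Lpts), (toE_eq (by rw [h0]; push_cast [emb]; ring) (by rw [h1]; push_cast [emb]; ring) (by rw [h2]; push_cast [emb]; ring)).symm⟩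
      · exact ⟨(((-1:ℤ),(-1:ℤ)), ((1:ℤ),(0:ℤ)), ((-1:ℤ),(0:ℤ))), (by decide : (((-1:ℤ),(-1:ℤ)), ((1:ℤ),(0:ℤ)), ((-1:ℤ),(0:ℤ))) ∈ Lpts), (toE_eq (by rw [h0]; push_cast [emb]; ring) (by rw [h1]; push_cast [emb]; ring) (by rw [h2]; push_cast [emb]; ring)).symm⟩
      · exact ⟨(((-1:ℤ),(-1:ℤ)), ((-1:ℤ),(0:ℤ)), ((1:ℤ),(0:ℤ))), (by decide : (((-1:ℤ),(-1:ℤ)), ((-1:ℤ),(0:ℤ)), ((1:ℤ),(0:ℤ))) ∈ Lpts), (toE_eq (by rw [h0]; push_cast [emb]; ring) (by rw [h1]; push_cast [emb]; ring) (by rw [h2]; push_cast [emb]; ring)).symm⟩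
      · exact ⟨(((-1:ℤ),(-1:ℤ)), ((-1:ℤ),(0:ℤ)), ((-1:ℤ),(0:ℤ))), (by decide : (((-1:ℤ),(-1:ℤ)), ((-1:ℤ),(0:ℤ)), ((-1:ℤ),(0:ℤ))) ∈ Lpts), (toE_eq (by rw [h0]; push_cast [emb]; ring) (by rw [h1]; push_cast [emb]; ring) (by rw [h2]; push_cast [emb]; ring)).symm⟩
    · have h0 : v 0 = ε 0 := by rw [key 0, if_neg (by rw [hk]; decide), mul_one]
      have h1 : v 1 = ε 1 * (1 + Real.sqrt 2) := by rw [key 1, if_pos hk.symm]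
      have h2 : v 2 = ε 2 := by rw [key 2, if_neg (by rw [hk]; decide), mul_one]
      rcases hε 0 with e0 | e0 <;> rcases hε 1 with e1 | e1 <;> rcases hε 2 with e2 | e2 <;>
        rw [e0] at h0 <;> rw [e1] at h1 <;> rw [e2] at h2
      · exact ⟨(((1:ℤ),(0:ℤ)), ((1:ℤ),(1:ℤ)), ((1:ℤ),(0:ℤ))), (by decide : (((1:ℤ),(0:ℤ)), ((1:ℤ),(1:ℤ)), ((1:ℤ),(0:ℤ))) ∈ Lpts), (toE_eq (by rw [h0]; push_cast [emb]; ring) (by rw [h1]; push_cast [emb]; ring) (by rw [h2]; push_cast [emb]; ring)).symm⟩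
      · exact ⟨(((1:ℤ),(0:ℤ)), ((1:ℤ),(1:ℤ)), ((-1:ℤ),(0:ℤ))), (by decide : (((1:ℤ),(0:ℤ)), ((1:ℤ),(1:ℤ)), ((-1:ℤ),(0:ℤ))) ∈ Lpts), (toE_eq (by rw [h0]; push_cast [emb]; ring) (by rw [h1]; push_cast [emb]; ring) (by rw [h2]; push_cast [emb]; ring)).symm⟩
      · exact ⟨(((1:ℤ),(0:ℤ)), ((-1:ℤ),(-1:ℤ)), ((1:ℤ),(0:ℤ))), (by decide : (((1:ℤ),(0:ℤ)), ((-1:ℤ),(-1:ℤ)), ((1:ℤ),(0:ℤ))) ∈ Lpts), (toE_eq (by rw [h0]; push_cast [emb]; ring) (by rw [h1]; push_cast [emb]; ring) (by rw [h2]; push_cast [emb]; ring)).symm⟩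
      · exact ⟨(((1:ℤ),(0:ℤ)), ((-1:ℤ),(-1:ℤ)), ((-1:ℤ),(0:ℤ))), (by decide : (((1:ℤ),(0:ℤ)), ((-1:ℤ),(-1:ℤ)), ((-1:ℤ),(0:ℤ))) ∈ Lpts), (toE_eq (by rw [h0]; push_cast [emb]; ring) (by rw [h1]; push_cast [emb]; ring) (by rw [h2]; push_cast [emb]; ring)).symm⟩
      · exact ⟨(((-1:ℤ),(0:ℤ)), ((1:ℤ),(1:ℤ)), ((1:ℤ),(0:ℤ))), (by decide : (((-1:ℤ),(0:ℤ)), ((1:ℤ),(1:ℤ)), ((1:ℤ),(0:ℤ))) ∈ Lpts), (toE_eq (by rw [h0]; push_cast [emb]; ring) (by rw [h1]; push_cast [emb]; ring) (by rw [h2]; push_cast [emb]; ring)).symm⟩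
      · exact ⟨(((-1:ℤ),(0:ℤ)), ((1:ℤ),(1:ℤ)), ((-1:ℤ),(0:ℤ))), (by decide : (((-1:ℤ),(0:ℤ)), ((1:ℤ),(1:ℤ)), ((-1:ℤ),(0:ℤ))) ∈ Lpts), (toE_eq (by rw [h0]; push_cast [emb]; ring) (by rw [h1]; push_cast [emb]; ring) (by rw [h2]; push_cast [emb]; ring)).symm⟩
      · exact ⟨(((-1:ℤ),(0:ℤ)), ((-1:ℤ),(-1:ℤ)), ((1:ℤ),(0:ℤ))), (by decide : (((-1:ℤ),(0:ℤ)), ((-1:ℤ),(-1:ℤ)), ((1:ℤ),(0:ℤ))) ∈ Lpts), (toE_eq (by rw [h0]; push_cast [emb]; ring) (by rw [h1]; push_cast [emb]; ring) (by rw [h2]; push_cast [emb]; ring)).symm⟩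
      · exact ⟨(((-1:ℤ),(0:ℤ)), ((-1:ℤ),(-1:ℤ)), ((-1:ℤ),(0:ℤ))), (by decide : (((-1:ℤ),(0:ℤ)), ((-1:ℤ),(-1:ℤ)), ((-1:ℤ),(0:ℤ))) ∈ Lpts), (toE_eq (by rw [h0]; push_cast [emb]; ring) (by rw [h1]; push_cast [emb]; ring) (by rw [h2]; push_cast [emb]; ring)).symm⟩
    · have h0 : v 0 = ε 0 := by rw [key 0, if_neg (by rw [hk]; decide), mul_one]
      have h1 : v 1 = ε 1 := by rw [key 1, if_neg (by rw [hk]; decide), mul_one]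
      have h2 : v 2 = ε 2 * (1 + Real.sqrt 2) := by rw [key 2, if_pos hk.symm]
      rcases hε 0 with e0 | e0 <;> rcases hε 1 with e1 | e1 <;> rcases hε 2 with e2 | e2 <;>
        rw [e0] at h0 <;> rw [e1] at h1 <;> rw [e2] at h2
      · exact absurd (by
          rw [show v = pt (1:ℝ) (1:ℝ) (1 + Real.sqrt 2) from
            eq_pt h0 h1 (by rw [h2]; ring)]
          simp [Vtop]) hvt
      · exact ⟨(((1:ℤ),(0:ℤ)), ((1:ℤ),(0:ℤ)), ((-1:ℤ),(-1:ℤ))), (by decide : (((1:ℤ),(0:ℤ)), ((1:ℤ),(0:ℤ)), ((-1:ℤ),(-1:ℤ))) ∈ Lpts), (toE_eq (by rw [h0]; push_cast [emb]; ring) (by rw [h1]; push_cast [emb]; ring) (by rw [h2]; push_cast [emb]; ring)).symm⟩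
      · exact absurd (by
          rw [show v = pt (1:ℝ) ((-1):ℝ) (1 + Real.sqrt 2) from
            eq_pt h0 h1 (by rw [h2]; ring)]
          simp [Vtop]) hvt
      · exact ⟨(((1:ℤ),(0:ℤ)), ((-1:ℤ),(0:ℤ)), ((-1:ℤ),(-1:ℤ))), (by decide : (((1:ℤ),(0:ℤ)), ((-1:ℤ),(0:ℤ)), ((-1:ℤ),(-1:ℤ))) ∈ Lpts), (toE_eq (by rw [h0]; push_cast [emb]; ring) (by rw [h1]; push_cast [emb]; ring) (by rw [h2]; push_cast [emb]; ring)).symm⟩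
      · exact absurd (by
          rw [show v = pt ((-1):ℝ) (1:ℝ) (1 + Real.sqrt 2) from
            eq_pt h0 h1 (by rw [h2]; ring)]
          simp [Vtop]) hvt
      · exact ⟨(((-1:ℤ),(0:ℤ)), ((1:ℤ),(0:ℤ)), ((-1:ℤ),(-1:ℤ))), (by decide : (((-1:ℤ),(0:ℤ)), ((1:ℤ),(0:ℤ)), ((-1:ℤ),(-1:ℤ))) ∈ Lpts), (toE_eq (by rw [h0]; push_cast [emb]; ring) (by rw [h1]; push_cast [emb]; ring) (by rw [h2]; push_cast [emb]; ring)).symm⟩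
      · exact absurd (by
          rw [show v = pt ((-1):ℝ) ((-1):ℝ) (1 + Real.sqrt 2) from
            eq_pt h0 h1 (by rw [h2]; ring)]
          simp [Vtop]) hvt
      · exact ⟨(((-1:ℤ),(0:ℤ)), ((-1:ℤ),(0:ℤ)), ((-1:ℤ),(-1:ℤ))), (by decide : (((-1:ℤ),(0:ℤ)), ((-1:ℤ),(0:ℤ)), ((-1:ℤ),(-1:ℤ))) ∈ Lpts), (toE_eq (by rw [h0]; push_cast [emb]; ring) (by rw [h1]; push_cast [emb]; ring) (by rw [h2]; push_cast [emb]; ring)).symm⟩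
  · rcases hnew with rfl | rfl | rfl | rfl
    · exact ⟨(((0:ℤ),(1:ℤ)), ((0:ℤ),(0:ℤ)), ((1:ℤ),(1:ℤ))), (by decide : (((0:ℤ),(1:ℤ)), ((0:ℤ),(0:ℤ)), ((1:ℤ),(1:ℤ))) ∈ Lpts), (eq_pt (by show emb ((0:ℤ),(1:ℤ)) = _; push_cast [emb]; ring) (by show emb ((0:ℤ),(0:ℤ)) = _; push_cast [emb]; ring) (by show emb ((1:ℤ),(1:ℤ)) = _; push_cast [emb]; ring))⟩
    · exact ⟨(((0:ℤ),(-1:ℤ)), ((0:ℤ),(0:ℤ)), ((1:ℤ),(1:ℤ))), (by decide : (((0:ℤ),(-1:ℤ)), ((0:ℤ),(0:ℤ)), ((1:ℤ),(1:ℤ))) ∈ Lpts), (eq_pt (by show emb ((0:ℤ),(-1:ℤ)) = _; push_cast [emb]; ring) (by show emb ((0:ℤ),(0:ℤ)) = _; push_cast [emb]; ring) (by show emb ((1:ℤ),(1:ℤ)) = _; push_cast [emb]; ring))⟩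
    · exact ⟨(((0:ℤ),(0:ℤ)), ((0:ℤ),(1:ℤ)), ((1:ℤ),(1:ℤ))), (by decide : (((0:ℤ),(0:ℤ)), ((0:ℤ),(1:ℤ)), ((1:ℤ),(1:ℤ))) ∈ Lpts), (eq_pt (by show emb ((0:ℤ),(0:ℤ)) = _; push_cast [emb]; ring) (by show emb ((0:ℤ),(1:ℤ)) = _; push_cast [emb]; ring) (by show emb ((1:ℤ),(1:ℤ)) = _; push_cast [emb]; ring))⟩
    · exact ⟨(((0:ℤ),(0:ℤ)), ((0:ℤ),(-1:ℤ)), ((1:ℤ),(1:ℤ))), (by decide : (((0:ℤ),(0:ℤ)), ((0:ℤ),(-1:ℤ)), ((1:ℤ),(1:ℤ))) ∈ Lpts), (eq_pt (by show emb ((0:ℤ),(0:ℤ)) = _; push_cast [emb]; ring) (by show emb ((0:ℤ),(-1:ℤ)) = _; push_cast [emb]; ring) (by show emb ((1:ℤ),(1:ℤ)) = _; push_cast [emb]; ring))⟩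



lemma V'_eq : V' = toE '' {p | p ∈ Lpts} := Set.Subset.antisymm sub1 sub2

/-- In the pseudo-rhombicuboctahedron every vertex has exactly 4 neighbors: the minimum
distance between distinct points of `V'` is 2, and every `v ∈ V'` has exactly 4 points
of `V'` at distance 2. -/
theorem pseudoRhombicuboctahedron_four_neighbors :
    (∀ u ∈ V', ∀ w ∈ V', u ≠ w → 2 ≤ dist u w) ∧
    (∃ u ∈ V', ∃ w ∈ V', u ≠ w ∧ dist u w = 2) ∧
    (∀ v ∈ V', {u | u ∈ V' ∧ dist u v = 2}.ncard = 4) := by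
  refine ⟨?_, ?_, ?_⟩
  · rintro u hu w hw hne
    rw [V'_eq] at hu hw
    obtain ⟨p, hp, rfl⟩ := hu
    obtain ⟨q, hq, rfl⟩ := hw
    simp only [Set.mem_setOf_eq] at hp hq
    have hpq : p ≠ q := fun h => hne (by rw [h])
    have key : ∀ p ∈ Lpts, ∀ q ∈ Lpts, p ≠ q → ge4 (d2 p q) := by decide
    exact ge4_le_dist (key p hp q hq hpq)
  · refine ⟨toE (((1:ℤ),(1:ℤ)), ((1:ℤ),(0:ℤ)), ((1:ℤ),(0:ℤ))), ?_,
      toE (((1:ℤ),(1:ℤ)), ((1:ℤ),(0:ℤ)), ((-1:ℤ),(0:ℤ))), ?_, ?_, ?_⟩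
    · rw [V'_eq]; exact ⟨_, (by decide : (((1:ℤ),(1:ℤ)), ((1:ℤ),(0:ℤ)), ((1:ℤ),(0:ℤ))) ∈ Lpts), rfl⟩
    · rw [V'_eq]; exact ⟨_, (by decide : (((1:ℤ),(1:ℤ)), ((1:ℤ),(0:ℤ)), ((-1:ℤ),(0:ℤ))) ∈ Lpts), rfl⟩
    · exact fun h => absurd (toE_inj h) (by decide)
    · exact dist_eq_two_iff.2 (by decide)
  · intro v hv
    rw [V'_eq] at hv
    obtain ⟨q, hq, rfl⟩ := hv
    simp only [Set.mem_setOf_eq] at hq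
    have hset : {u | u ∈ V' ∧ dist u (toE q) = 2}
        = toE '' {p | p ∈ Lpts.filter (fun p => decide (d2 p q = (4, 0)))} := by
      ext u
      simp only [Set.mem_setOf_eq, V'_eq, Set.mem_image, List.mem_filter, decide_eq_true_eq]
      constructor
      · rintro ⟨⟨p, hp, rfl⟩, hd⟩
        exact ⟨p, ⟨hp, dist_eq_two_iff.1 hd⟩, rfl⟩
      · rintro ⟨p, ⟨hp, hd⟩, rfl⟩
        exact ⟨⟨p, hp, rfl⟩, dist_eq_two_iff.2 hd⟩
    rw [hset, Set.ncard_image_of_injective _ toE_inj]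
    have hfin : {p | p ∈ Lpts.filter (fun p => decide (d2 p q = (4, 0)))}
        = ↑((Lpts.filter (fun p => decide (d2 p q = (4, 0)))).toFinset) := by
      simp [List.coe_toFinset]
    rw [hfin, Set.ncard_coe_finset]
    have hcard : ∀ q ∈ Lpts,
        ((Lpts.filter (fun p => decide (d2 p q = ((4:ℤ), (0:ℤ))))).toFinset).card = 4 := by decide
    exact hcard q hq
end
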